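/- Let T, R, P, S be real numbers satisfying the Prisoner's Dilemma inequalities T > R > P > S, and let x > 0 be any fixed token value (in particular one satisfying the MATE cooperation condition x ≥ max{P − S, (T − R)/3}). Then there exist c > 0 and b ∈ ℝ such that the transformed payoffs T' = c·T + b, R' = c·R + b, P' = c·P + b, S' = c·S + b still satisfy T' > R' > P' > S', yet max{P' − S', (T' − R')/3} > x, so the MATE cooperation condition x ≥ max{P' − S', (T' − R')/3} fails for the transformed payoffs. Hence MATE with a fixed token is not invariant to positive affine reward changes in the general PD. -/
import Mathlib

/-- MATE with a fixed token is not invariant to positive affine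
reward changes in the general PD: for any PD payoffs `T > R > P > S` and any
fixed token `x > 0` (in particular one satisfying the MATE cooperation
condition `x ≥ max {P − S, (T − R)/3}`), there is a positive affine
transformation `r ↦ c * r + b` preserving the PD inequalities for which the
MATE cooperation condition fails. -/
theorem mate_not_invariant_to_affine_changes (T R P S x : ℝ)
    (hTR : T > R) (hRP : R > P) (hPS : P > S) (hx : x > 0)
    (hmate : x ≥ max (P - S) ((T - R) / 3)) :
    ∃ c b : ℝ, c > 0 ∧
      (c * T + b > c * R + b ∧ c * R + b > c * P + b ∧ c * P + b > c * S + b) ∧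
      max ((c * P + b) - (c * S + b)) (((c * T + b) - (c * R + b)) / 3) > x ∧
      ¬ (x ≥ max ((c * P + b) - (c * S + b)) (((c * T + b) - (c * R + b)) / 3)) := by
  have hPS' : P - S > 0 := by linarith
  refine ⟨(x + 1) / (P - S), 0, by positivity, ⟨by nlinarith [div_pos (by linarith : (0:ℝ) < x + 1) hPS'], by nlinarith [div_pos (by linarith : (0:ℝ) < x + 1) hPS'], by nlinarith [div_pos (by linarith : (0:ℝ) < x + 1) hPS']⟩, ?_, ?_⟩
  · have : (x + 1) / (P - S) * P + 0 - ((x + 1) / (P - S) * S + 0) = x + 1 := by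
      field_simp; ring
    rw [this]
    exact lt_max_of_lt_left (by linarith)
  · push_neg
    have : (x + 1) / (P - S) * P + 0 - ((x + 1) / (P - S) * S + 0) = x + 1 := by
      field_simp; ring
    rw [this]
    exact lt_max_of_lt_left (by linarith)
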